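/- arXiv:1902.10284 — 4 statements merged into one kernel-verified Lean document; each statement's English description precedes it below -/
import Mathlib

section
/- Let n, m be positive integers and let r_1, ..., r_n be real labels taking exactly m distinct values a_1, ..., a_m (each value attained by at least one label). Define the matrix Δ̄^{1/2} ∈ S^m by (Δ̄^{1/2})_{ij} = |a_i - a_j| for i ≠ j and 0 on the diagonal, and let μ₀ be the smallest eigenvalue of the symmetric matrix -(1/2) J_m Δ̄^{1/2} J_m, where J_m = I_m - (1/m)𝟏𝟏^T. If β ≥ -4μ₀, then the symmetric matrix D ∈ S^n defined by D_{ij} = (|r_i - r_j| + β)^2 if r_i ≠ r_j and D_{ij} = 0 otherwise, is a Euclidean distance matrix: there exist an integer s ≥ 1 and points y_1, ..., y_n ∈ ℝ^s such that ‖y_i - y_j‖^2 = D_{ij} for all i, j. -/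
open Matrix

/-- The centering matrix `J = I - (1/k) 𝟏𝟏ᵀ`. -/
noncomputable def centeringMatrix (k : ℕ) : Matrix (Fin k) (Fin k) ℝ :=
  1 - (k : ℝ)⁻¹ • Matrix.of (fun _ _ => (1 : ℝ))

/-- The double-centered matrix `B(C) = -(1/2) J C J`. -/
noncomputable def doubleCenter {k : ℕ} (C : Matrix (Fin k) (Fin k) ℝ) :
    Matrix (Fin k) (Fin k) ℝ :=
  (-(1/2) : ℝ) • (centeringMatrix k * C * centeringMatrix k)

/-- `D` is a (squared) Euclidean distance matrix: there are an integer `s ≥ 1` and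
points `y_1, …, y_n ∈ ℝ^s` with `D i j = ‖y i - y j‖²` for all `i, j`. -/
def IsEDM {n : ℕ} (D : Matrix (Fin n) (Fin n) ℝ) : Prop :=
  ∃ s : ℕ, 1 ≤ s ∧ ∃ y : Fin n → EuclideanSpace ℝ (Fin s),
    ∀ i j, D i j = ‖y i - y j‖ ^ 2

open Finset

set_option maxHeartbeats 1000000


noncomputable def preV (V : Finset ℝ) (v : ℝ) : ℝ :=
  if h : (V.filter (fun z => z < v)).Nonempty then (V.filter (fun z => z < v)).max' h else v

lemma preV_le {V : Finset ℝ} {v : ℝ} : preV V v ≤ v := by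
  unfold preV
  split_ifs with h
  · exact le_of_lt ((Finset.max'_lt_iff _ h).mpr (fun y hy => (mem_filter.mp hy).2))
  · exact le_rfl

lemma le_preV {V : Finset ℝ} {v w : ℝ} (hw : w ∈ V) (hwv : w < v) : w ≤ preV V v := by
  have hne : (V.filter (fun z => z < v)).Nonempty := ⟨w, mem_filter.mpr ⟨hw, hwv⟩⟩
  have hmem : w ∈ V.filter (fun z => z < v) := mem_filter.mpr ⟨hw, hwv⟩
  unfold preV
  rw [dif_pos hne]
  exact Finset.le_max' _ _ hmem

lemma preV_mem {V : Finset ℝ} {v w : ℝ} (hw : w ∈ V) (hwv : w < v) : preV V v ∈ V := by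
  have hne : (V.filter (fun z => z < v)).Nonempty := ⟨w, mem_filter.mpr ⟨hw, hwv⟩⟩
  unfold preV
  rw [dif_pos hne]
  exact (mem_filter.mp (Finset.max'_mem _ hne)).1

lemma preV_lt' {V : Finset ℝ} {v w : ℝ} (hw : w ∈ V) (hwv : w < v) : preV V v < v := by
  have hne : (V.filter (fun z => z < v)).Nonempty := ⟨w, mem_filter.mpr ⟨hw, hwv⟩⟩
  unfold preV
  rw [dif_pos hne]
  exact (Finset.max'_lt_iff _ hne).mpr (fun y hy => (mem_filter.mp hy).2)

lemma gap_nonneg (V : Finset ℝ) (v : ℝ) : 0 ≤ v - preV V v :=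
  sub_nonneg.mpr preV_le

lemma telesc (V : Finset ℝ) :
    ∀ N x y, x ∈ V → y ∈ V → y ≤ x → (V.filter (fun v => y < v ∧ v ≤ x)).card ≤ N →
    ∑ v ∈ V.filter (fun v => y < v ∧ v ≤ x), (v - preV V v) = x - y := by
  intro N
  induction N with
  | zero =>
    intro x y hx hy hyx hcard
    have hxy : x = y := by
      by_contra hne
      have hxlt : y < x := lt_of_le_of_ne hyx (fun h => hne h.symm)
      have : x ∈ V.filter (fun v => y < v ∧ v ≤ x) := mem_filter.mpr ⟨hx, hxlt, le_rfl⟩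
      have := Finset.card_pos.mpr ⟨x, this⟩
      omega
    subst hxy
    have : V.filter (fun v => x < v ∧ v ≤ x) = ∅ := by
      apply Finset.filter_eq_empty_iff.mpr
      intro v hv h
      exact absurd (h.1.trans_le h.2) (lt_irrefl x)
    rw [this]; simp
  | succ N ih =>
    intro x y hx hy hyx hcard
    rcases eq_or_lt_of_le hyx with rfl | hlt
    · have : V.filter (fun v => y < v ∧ v ≤ y) = ∅ := by
        apply Finset.filter_eq_empty_iff.mpr
        intro v hv h
        exact absurd (h.1.trans_le h.2) (lt_irrefl y)
      rw [this]; simp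
    · set T := V.filter (fun v => y < v ∧ v ≤ x) with hT
      have hxT : x ∈ T := mem_filter.mpr ⟨hx, hlt, le_rfl⟩
      set p := preV V x with hp
      have hpV : p ∈ V := preV_mem hy hlt
      have hpx : p < x := preV_lt' hy hlt
      have hyp : y ≤ p := le_preV hy hlt
      have herase : T.erase x = V.filter (fun v => y < v ∧ v ≤ p) := by
        ext v
        simp only [mem_erase, hT, mem_filter]
        constructor
        · rintro ⟨hne, hvV, hyv, hvx⟩
          exact ⟨hvV, hyv, le_preV hvV (lt_of_le_of_ne hvx hne)⟩
        · rintro ⟨hvV, hyv, hvp⟩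
          exact ⟨ne_of_lt (lt_of_le_of_lt hvp hpx), hvV, hyv, hvp.trans hpx.le⟩
      have hsum : ∑ v ∈ T.erase x, (v - preV V v) + (x - preV V x)
          = ∑ v ∈ T, (v - preV V v) := Finset.sum_erase_add _ _ hxT
      have hcard' : (V.filter (fun v => y < v ∧ v ≤ p)).card ≤ N := by
        rw [← herase]
        have := Finset.card_erase_of_mem hxT
        omega
      have := ih p y hpV hy hyp hcard'
      rw [← hsum, herase, this, ← hp]
      ring

/-- one-dimensional "cut" coordinate function -/
noncomputable def Hcut (V : Finset ℝ) (c : ℝ) (x v : ℝ) : ℝ :=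
  if v ≤ x then Real.sqrt (c * (v - preV V v)) else 0

lemma sumH_le (V : Finset ℝ) (c : ℝ) (hc : 0 ≤ c) {x y : ℝ}
    (hx : x ∈ V) (hy : y ∈ V) (hyx : y ≤ x) :
    ∑ v ∈ V, (Hcut V c x v - Hcut V c y v) ^ 2 = c * (x - y) := by
  have step : ∀ v ∈ V, (Hcut V c x v - Hcut V c y v) ^ 2
      = if y < v ∧ v ≤ x then c * (v - preV V v) else 0 := by
    intro v hv
    unfold Hcut
    rcases le_or_gt v y with h1 | h1
    · rw [if_pos h1, if_pos (h1.trans hyx), if_neg (by simp [h1, not_lt.mpr h1])]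
      ring
    · rcases le_or_gt v x with h2 | h2
      · rw [if_pos h2, if_neg (not_le.mpr h1), if_pos ⟨h1, h2⟩, sub_zero,
          Real.sq_sqrt (mul_nonneg hc (gap_nonneg V v))]
      · rw [if_neg (not_le.mpr h2), if_neg (not_le.mpr (hyx.trans_lt h2)),
          if_neg (by simp [not_le.mpr h2])]
        ring
  rw [Finset.sum_congr rfl step, Finset.sum_ite, Finset.sum_const_zero, add_zero,
    ← Finset.mul_sum, telesc V (V.filter (fun v => y < v ∧ v ≤ x)).card x y hx hy hyx le_rfl]

lemma sumH (V : Finset ℝ) (c : ℝ) (hc : 0 ≤ c) {x y : ℝ}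
    (hx : x ∈ V) (hy : y ∈ V) :
    ∑ v ∈ V, (Hcut V c x v - Hcut V c y v) ^ 2 = c * |x - y| := by
  rcases le_total y x with h | h
  · rw [sumH_le V c hc hx hy h, abs_of_nonneg (sub_nonneg.mpr h)]
  · have := sumH_le V c hc hy hx h
    calc ∑ v ∈ V, (Hcut V c x v - Hcut V c y v) ^ 2
        = ∑ v ∈ V, (Hcut V c y v - Hcut V c x v) ^ 2 := by
          apply Finset.sum_congr rfl; intro v _; ring
      _ = c * (y - x) := this
      _ = c * |x - y| := by rw [abs_sub_comm, abs_of_nonneg (sub_nonneg.mpr h)]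

noncomputable def repIdx {n : ℕ} (r : Fin n → ℝ) (k : Fin n) : Fin n :=
  (Finset.univ.filter (fun j => r j = r k)).min' ⟨k, by simp⟩

lemma r_repIdx {n : ℕ} (r : Fin n → ℝ) (k : Fin n) : r (repIdx r k) = r k := by
  have := Finset.min'_mem (Finset.univ.filter (fun j => r j = r k)) ⟨k, by simp⟩
  simpa [repIdx] using (Finset.mem_filter.mp this).2

lemma repIdx_congr {n : ℕ} (r : Fin n → ℝ) {k k' : Fin n} (h : r k = r k') :
    repIdx r k = repIdx r k' := by
  unfold repIdx
  congr 1
  ext j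
  simp [h]

lemma repIdx_idem {n : ℕ} (r : Fin n → ℝ) (k : Fin n) :
    repIdx r (repIdx r k) = repIdx r k :=
  repIdx_congr r (r_repIdx r k)

/-- coordinates for the `c · |x - y|` part, indexed by `Fin n` -/
noncomputable def hfun {n : ℕ} (r : Fin n → ℝ) (c x : ℝ) (k : Fin n) : ℝ :=
  if repIdx r k = k then Hcut (Finset.univ.image r) c x (r k) else 0

lemma sum_hfun {n : ℕ} (r : Fin n → ℝ) (c : ℝ) (hc : 0 ≤ c) (i i' : Fin n) :
    ∑ k, (hfun r c (r i) k - hfun r c (r i') k) ^ 2 = c * |r i - r i'| := by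
  classical
  set V := Finset.univ.image r with hV
  set R := Finset.univ.filter (fun k => repIdx r k = k) with hR
  have h1 : ∑ k, (hfun r c (r i) k - hfun r c (r i') k) ^ 2
      = ∑ k ∈ R, (hfun r c (r i) k - hfun r c (r i') k) ^ 2 := by
    symm
    apply Finset.sum_subset (Finset.subset_univ R)
    intro k _ hk
    have : ¬ repIdx r k = k := by simpa [hR] using hk
    simp [hfun, this]
  have h2 : ∀ k ∈ R, (hfun r c (r i) k - hfun r c (r i') k) ^ 2
      = (Hcut V c (r i) (r k) - Hcut V c (r i') (r k)) ^ 2 := by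
    intro k hk
    have : repIdx r k = k := by simpa [hR] using hk
    simp [hfun, this, hV]
  have hinj : ∀ k ∈ R, ∀ k' ∈ R, r k = r k' → k = k' := by
    intro k hk k' hk' h
    have e1 : repIdx r k = k := by simpa [hR] using hk
    have e2 : repIdx r k' = k' := by simpa [hR] using hk'
    rw [← e1, ← e2, repIdx_congr r h]
  have himg : R.image r = V := by
    ext v
    simp only [hV, Finset.mem_image, Finset.mem_univ, true_and]
    constructor
    · rintro ⟨k, _, rfl⟩; exact ⟨k, rfl⟩
    · rintro ⟨k, rfl⟩
      refine ⟨repIdx r k, ?_, r_repIdx r k⟩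
      simp [hR, repIdx_idem]
  have h3 : ∑ k ∈ R, (Hcut V c (r i) (r k) - Hcut V c (r i') (r k)) ^ 2
      = ∑ v ∈ V, (Hcut V c (r i) v - Hcut V c (r i') v) ^ 2 := by
    rw [← himg, Finset.sum_image hinj]
  rw [h1, Finset.sum_congr rfl h2, h3]
  exact sumH V c hc (by simp [hV]) (by simp [hV])

/-- coordinates for the `β²` part -/
noncomputable def gfun {n : ℕ} (r : Fin n → ℝ) (β : ℝ) (i k : Fin n) : ℝ :=
  if repIdx r i = k then β / Real.sqrt 2 else 0

lemma sum_gfun {n : ℕ} (r : Fin n → ℝ) (β : ℝ) (i i' : Fin n) :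
    ∑ k, (gfun r β i k - gfun r β i' k) ^ 2 = if r i = r i' then 0 else β ^ 2 := by
  classical
  by_cases h : r i = r i'
  · simp [gfun, repIdx_congr r h, h]
  · rw [if_neg h]
    have hne : repIdx r i ≠ repIdx r i' := by
      intro he
      exact h (by rw [← r_repIdx r i, ← r_repIdx r i', he])
    have step : ∀ k, (gfun r β i k - gfun r β i' k) ^ 2
        = (if repIdx r i = k then β ^ 2 / 2 else 0)
          + (if repIdx r i' = k then β ^ 2 / 2 else 0) := by
      intro k
      unfold gfun
      by_cases h1 : repIdx r i = k
      · have h2 : ¬ repIdx r i' = k := fun h2 => hne (h1.trans h2.symm)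
        rw [if_pos h1, if_neg h2, if_pos h1, if_neg h2, sub_zero, add_zero,
          div_pow, Real.sq_sqrt (by norm_num : (0:ℝ) ≤ 2)]
      · by_cases h2 : repIdx r i' = k
        · rw [if_neg h1, if_pos h2, if_neg h1, if_pos h2, zero_sub, zero_add,
            neg_pow, div_pow, Real.sq_sqrt (by norm_num : (0:ℝ) ≤ 2)]
          ring
        · simp [h1, h2]
    rw [Finset.sum_congr rfl (fun k _ => step k), Finset.sum_add_distrib,
      Finset.sum_ite_eq, Finset.sum_ite_eq]
    simp


lemma centering_mulVec_one (k : ℕ) (hk : 0 < k) :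
    centeringMatrix k *ᵥ (fun _ => (1 : ℝ)) = 0 := by
  funext j
  simp only [centeringMatrix, sub_mulVec, smul_mulVec, one_mulVec,
    Pi.sub_apply, Pi.smul_apply, Pi.zero_apply, smul_eq_mul]
  have : ((Matrix.of (fun _ _ => (1:ℝ)) : Matrix (Fin k) (Fin k) ℝ) *ᵥ (fun _ => (1:ℝ))) j = (k : ℝ) := by
    simp [Matrix.mulVec, dotProduct]
  rw [this]
  field_simp
  norm_num

lemma doubleCenter_mulVec_one {k : ℕ} (hk : 0 < k) (C : Matrix (Fin k) (Fin k) ℝ) :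
    doubleCenter C *ᵥ (fun _ => (1 : ℝ)) = 0 := by
  unfold doubleCenter
  rw [smul_mulVec, ← Matrix.mulVec_mulVec, centering_mulVec_one k hk,
    Matrix.mulVec_zero, smul_zero]

lemma exists_eigenvalue_nonpos {k : ℕ} (hk : 0 < k) {A : Matrix (Fin k) (Fin k) ℝ}
    (hA : A.IsHermitian) (h1 : A *ᵥ (fun _ => (1:ℝ)) = 0) :
    ∃ t, hA.eigenvalues t ≤ 0 := by
  by_contra hcon
  push_neg at hcon
  have hdet : A.det ≠ 0 := by
    rw [hA.det_eq_prod_eigenvalues]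
    have : (0:ℝ) < ∏ i, hA.eigenvalues i := Finset.prod_pos (fun i _ => hcon i)
    exact ne_of_gt this
  have hunit : IsUnit A := (Matrix.isUnit_iff_isUnit_det A).mpr (isUnit_iff_ne_zero.mpr hdet)
  have hinj := (Matrix.mulVec_injective_iff_isUnit.mpr hunit)
  have : (fun _ => (1:ℝ)) = (0 : Fin k → ℝ) := hinj (by rw [h1, Matrix.mulVec_zero])
  have := congrFun this ⟨0, hk⟩
  norm_num at this

lemma main_construct {n : ℕ} (r : Fin n → ℝ) (β : ℝ) (hβ : 0 ≤ β)
    (D : Matrix (Fin n) (Fin n) ℝ)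
    (hD : ∀ i j, D i j = if r i = r j then 0 else (|r i - r j| + β) ^ 2) :
    IsEDM D := by
  classical
  set F := (Unit ⊕ (Fin n ⊕ Fin n)) with hF
  set e : F ≃ Fin (Fintype.card F) := Fintype.equivFin F with he
  refine ⟨Fintype.card F, Fintype.card_pos, ?_⟩
  set f : Fin n → F → ℝ := fun i z =>
    Sum.elim (fun _ => r i)
      (Sum.elim (fun k => hfun r (2*β) (r i) k) (fun k => gfun r β i k)) z with hf
  set y : Fin n → EuclideanSpace ℝ (Fin (Fintype.card F)) :=
    fun i => WithLp.toLp 2 (fun t => f i (e.symm t)) with hy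
  refine ⟨y, ?_⟩
  intro i j
  have hnorm : ‖y i - y j‖ ^ 2
      = ∑ t : Fin (Fintype.card F), (f i (e.symm t) - f j (e.symm t)) ^ 2 := by
    rw [EuclideanSpace.norm_eq, Real.sq_sqrt (by positivity)]
    congr 1
    ext t
    simp only [Real.norm_eq_abs, sq_abs, hy]
    rfl
  rw [hnorm]
  have hsum : ∑ t : Fin (Fintype.card F), (f i (e.symm t) - f j (e.symm t)) ^ 2
      = ∑ z : F, (f i z - f j z) ^ 2 := Equiv.sum_comp e.symm (fun z => (f i z - f j z) ^ 2)
  rw [hsum]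
  have hsplit : ∑ z : F, (f i z - f j z) ^ 2
      = (r i - r j) ^ 2
        + (∑ k, (hfun r (2*β) (r i) k - hfun r (2*β) (r j) k) ^ 2
          + ∑ k, (gfun r β i k - gfun r β j k) ^ 2) := by
    rw [hF] at *
    rw [Fintype.sum_sum_type, Fintype.sum_sum_type]
    simp [hf]
  rw [hsplit, sum_hfun r (2*β) (by linarith) i j, sum_gfun r β i j, hD]
  by_cases h : r i = r j
  · simp [h]
  · rw [if_neg h, if_neg h]
    have : (r i - r j) ^ 2 = |r i - r j| ^ 2 := (sq_abs _).symm
    rw [this]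
    ring

theorem stmt0 (n m : ℕ) (hn : 0 < n) (hm : 0 < m)
    (r : Fin n → ℝ) (a : Fin m → ℝ)
    (ha : Function.Injective a)
    (hcover : ∀ i, ∃ t, r i = a t)
    (hattain : ∀ t, ∃ i, r i = a t)
    (Δhalf : Matrix (Fin m) (Fin m) ℝ)
    (hΔhalf : ∀ t u, Δhalf t u = |a t - a u|)
    (hHerm : (doubleCenter Δhalf).IsHermitian)
    (μ₀ : ℝ) (hμ₀ : μ₀ = ⨅ t, hHerm.eigenvalues t)
    (β : ℝ) (hβ : β ≥ -4 * μ₀)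
    (D : Matrix (Fin n) (Fin n) ℝ)
    (hD : ∀ i j, D i j = if r i = r j then 0 else (|r i - r j| + β) ^ 2) :
    IsEDM D := by
  obtain ⟨t, ht⟩ := exists_eigenvalue_nonpos hm hHerm (doubleCenter_mulVec_one hm Δhalf)
  have hμ : μ₀ ≤ 0 := by
    rw [hμ₀]
    exact le_trans (ciInf_le (Set.finite_range _).bddBelow t) ht
  exact main_construct r β (by linarith) D hD
end

section
/- Let n, m be positive integers and let r_1, ..., r_n be real labels taking exactly m distinct values a_1, ..., a_m (each value attained by at least one label). Fix β ∈ ℝ. Define D ∈ S^n by D_{ij} = (|r_i - r_j| + β)^2 if r_i ≠ r_j and D_{ij} = 0 otherwise, and define Δ ∈ S^m by Δ_{ij} = (|a_i - a_j| + β)^2 if i ≠ j and Δ_{ii} = 0. Then D is a Euclidean distance matrix if and only if Δ is a Euclidean distance matrix. -/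
open Matrix

theorem stmt1 (n m : ℕ) (hn : 0 < n) (hm : 0 < m)
    (r : Fin n → ℝ) (a : Fin m → ℝ)
    (ha : Function.Injective a)
    (hcover : ∀ i, ∃ t, r i = a t)
    (hattain : ∀ t, ∃ i, r i = a t)
    (β : ℝ)
    (D : Matrix (Fin n) (Fin n) ℝ)
    (hD : ∀ i j, D i j = if r i = r j then 0 else (|r i - r j| + β) ^ 2)
    (Δ : Matrix (Fin m) (Fin m) ℝ)
    (hΔ : ∀ t u, Δ t u = if t = u then 0 else (|a t - a u| + β) ^ 2) :
    IsEDM D ↔ IsEDM Δ := by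
  choose τ hτ using hcover
  choose σ hσ using hattain
  have hDΔ : ∀ i j, D i j = Δ (τ i) (τ j) := by
    intro i j
    rw [hD, hΔ, hτ i, hτ j]
    congr 1
    simp [ha.eq_iff]
  have hΔD : ∀ t u, Δ t u = D (σ t) (σ u) := by
    intro t u
    rw [hD, hΔ, hσ t, hσ u]
    congr 1
    simp [ha.eq_iff]
  constructor
  · rintro ⟨s, hs, y, hy⟩
    exact ⟨s, hs, fun t => y (σ t), fun t u => by rw [hΔD, hy]⟩
  · rintro ⟨s, hs, y, hy⟩
    exact ⟨s, hs, fun i => y (τ i), fun i j => by rw [hDΔ, hy]⟩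
end

section
/- Let m be a positive integer and let a_1, ..., a_m be real numbers. Define Δ̄^{1/2} ∈ S^m with entries |a_i - a_j| off the diagonal and 0 on the diagonal, and Δ̄ ∈ S^m with entries |a_i - a_j|^2 off the diagonal and 0 on the diagonal. Let J = I_m - (1/m)𝟏𝟏^T, B(C) := -(1/2) J C J, and let μ₀ be the smallest eigenvalue of B(Δ̄^{1/2}). If β ≥ -4μ₀, then for every x ∈ ℝ^m one has x^T B(Δ̄) x + 2β · x^T B(Δ̄^{1/2}) x + (1/2) β^2 · x^T J x ≥ β (2μ₀ + β/2) · x^T J x ≥ 0. -/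
open Matrix

lemma J_symm (k : ℕ) : (centeringMatrix k)ᵀ = centeringMatrix k := by
  ext i j
  simp [centeringMatrix, Matrix.one_apply, eq_comm]

-- idempotent

lemma J_idem {k : ℕ} (hk : 0 < k) :
    centeringMatrix k * centeringMatrix k = centeringMatrix k := by
  have hc : (k : ℝ) ≠ 0 := Nat.cast_ne_zero.mpr hk.ne'
  have hEE : (Matrix.of (fun _ _ => (1:ℝ)) : Matrix (Fin k) (Fin k) ℝ) *
      Matrix.of (fun _ _ => (1:ℝ)) = (k : ℝ) • Matrix.of (fun _ _ => (1:ℝ)) := by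
    ext i j; simp [Matrix.mul_apply]
  unfold centeringMatrix
  rw [sub_mul, mul_sub, mul_sub, one_mul, mul_one, one_mul, Matrix.mul_smul, Matrix.smul_mul, hEE,
    smul_smul, smul_smul]
  have : (↑k)⁻¹ * (↑k)⁻¹ * (k:ℝ) = (↑k)⁻¹ := by field_simp
  rw [this]
  abel

lemma J_mulVec_one {k : ℕ} (hk : 0 < k) :
    centeringMatrix k *ᵥ (fun _ => (1:ℝ)) = 0 := by
  have hc : (k : ℝ) ≠ 0 := Nat.cast_ne_zero.mpr hk.ne'
  ext i
  simp [centeringMatrix, Matrix.mulVec, dotProduct, Matrix.one_apply,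
    Finset.sum_sub_distrib, mul_inv_cancel₀ hc]

lemma rayleigh {k : ℕ} (A : Matrix (Fin k) (Fin k) ℝ) (hA : A.IsHermitian) (μ : ℝ)
    (hμ : ∀ i, μ ≤ hA.eigenvalues i) (x : Fin k → ℝ) :
    μ * (x ⬝ᵥ x) ≤ x ⬝ᵥ (A *ᵥ x) := by
  set U : Matrix (Fin k) (Fin k) ℝ := (hA.eigenvectorUnitary : Matrix (Fin k) (Fin k) ℝ)
  have hU : U * star U = 1 := Matrix.mem_unitaryGroup_iff.mp hA.eigenvectorUnitary.2
  have h1 : A - μ • 1 = U * (Matrix.diagonal (fun i => hA.eigenvalues i - μ)) * star U := by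
    have hs := hA.spectral_theorem
    rw [Unitary.conjStarAlgAut_apply] at hs
    have h2 : μ • (1 : Matrix (Fin k) (Fin k) ℝ) = U * (μ • 1) * star U := by
      rw [Matrix.mul_smul, Matrix.smul_mul, mul_one, hU]
    have h3 : A - μ • 1
        = U * Matrix.diagonal (RCLike.ofReal ∘ hA.eigenvalues) * star U - U * (μ • 1) * star U := by
      rw [← hs, ← h2]
    rw [h3, ← Matrix.sub_mul, ← Matrix.mul_sub]
    congr 1
    congr 1
    ext i j
    by_cases hij : i = j <;>
      simp [Matrix.diagonal, hij, Matrix.one_apply, RCLike.ofReal]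
  have hpsd : (A - μ • 1).PosSemidef := by
    rw [h1, show star U = Uᴴ from rfl]
    exact (Matrix.posSemidef_diagonal_iff.mpr fun i => sub_nonneg.mpr (hμ i)).mul_mul_conjTranspose_same U
  have := hpsd.dotProduct_mulVec_nonneg x
  simp only [star_trivial, RCLike.re_to_real] at this
  rw [Matrix.sub_mulVec, Matrix.smul_mulVec, Matrix.one_mulVec,
    dotProduct_sub, dotProduct_smul] at this
  simp only [smul_eq_mul] at this
  linarith

lemma dot_sym {k : ℕ} (x z : Fin k → ℝ) :
    x ⬝ᵥ (centeringMatrix k *ᵥ z) = (centeringMatrix k *ᵥ x) ⬝ᵥ z := by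
  rw [Matrix.dotProduct_mulVec, ← J_symm k, Matrix.vecMul_transpose, J_symm]

lemma dc_quad {k : ℕ} (C : Matrix (Fin k) (Fin k) ℝ) (x : Fin k → ℝ) :
    x ⬝ᵥ (doubleCenter C *ᵥ x)
      = (-(1/2) : ℝ) * ((centeringMatrix k *ᵥ x) ⬝ᵥ (C *ᵥ (centeringMatrix k *ᵥ x))) := by
  unfold doubleCenter
  rw [Matrix.smul_mulVec, dotProduct_smul, smul_eq_mul]
  congr 1
  rw [← Matrix.mulVec_mulVec, ← Matrix.mulVec_mulVec, dot_sym]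

theorem stmt6 (m : ℕ) (hm : 0 < m) (a : Fin m → ℝ)
    (Δhalf Δbar : Matrix (Fin m) (Fin m) ℝ)
    (hΔhalf : ∀ t u, Δhalf t u = |a t - a u|)
    (hΔbar : ∀ t u, Δbar t u = |a t - a u| ^ 2)
    (hHerm : (doubleCenter Δhalf).IsHermitian)
    (μ₀ : ℝ) (hμ₀ : μ₀ = ⨅ i, hHerm.eigenvalues i)
    (β : ℝ) (hβ : β ≥ -4 * μ₀) :
    ∀ x : Fin m → ℝ,
      x ⬝ᵥ (doubleCenter Δbar *ᵥ x) + 2 * β * (x ⬝ᵥ (doubleCenter Δhalf *ᵥ x))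
          + (1/2) * β ^ 2 * (x ⬝ᵥ (centeringMatrix m *ᵥ x))
        ≥ β * (2 * μ₀ + β / 2) * (x ⬝ᵥ (centeringMatrix m *ᵥ x)) ∧
      β * (2 * μ₀ + β / 2) * (x ⬝ᵥ (centeringMatrix m *ᵥ x)) ≥ 0 := by
  have : Nonempty (Fin m) := ⟨⟨0, hm⟩⟩
  have hlow : ∀ i, μ₀ ≤ hHerm.eigenvalues i := fun i =>
    hμ₀ ▸ ciInf_le (Set.Finite.bddBelow (Set.finite_range _)) i
  -- μ₀ ≤ 0
  have hones : doubleCenter Δhalf *ᵥ (fun _ => (1:ℝ)) = 0 := by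
    unfold doubleCenter
    rw [Matrix.smul_mulVec, ← Matrix.mulVec_mulVec, J_mulVec_one hm,
      Matrix.mulVec_zero, smul_zero]
  have hμneg : μ₀ ≤ 0 := by
    have h := rayleigh _ hHerm μ₀ hlow (fun _ => (1:ℝ))
    rw [hones] at h
    simp only [dotProduct_zero] at h
    have hdot : ((fun _ => (1:ℝ)) : Fin m → ℝ) ⬝ᵥ ((fun _ => (1:ℝ)) : Fin m → ℝ) = (m : ℝ) := by
      simp [dotProduct]
    rw [hdot] at h
    have hmpos : (0:ℝ) < m := by exact_mod_cast hm
    nlinarith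
  have hbeta : 0 ≤ β := by linarith
  intro x
  set y := centeringMatrix m *ᵥ x with hy
  -- P = y ⬝ᵥ y
  have hJJ : centeringMatrix m *ᵥ y = y := by
    rw [hy, Matrix.mulVec_mulVec, J_idem hm]
  have hP : x ⬝ᵥ (centeringMatrix m *ᵥ x) = y ⬝ᵥ y := by
    rw [← hy, dot_sym, ← hy]
    conv_lhs => rw [← hJJ]
    rw [dot_sym, hJJ]
  have hPnn : 0 ≤ y ⬝ᵥ y := Finset.sum_nonneg fun i _ => mul_self_nonneg _
  -- Rayleigh for Δhalf
  have hsame : y ⬝ᵥ (doubleCenter Δhalf *ᵥ y) = x ⬝ᵥ (doubleCenter Δhalf *ᵥ x) := by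
    rw [dc_quad, dc_quad, hJJ, ← hy]
  have hQ : μ₀ * (y ⬝ᵥ y) ≤ x ⬝ᵥ (doubleCenter Δhalf *ᵥ x) := by
    rw [← hsame]; exact rayleigh _ hHerm μ₀ hlow y
  -- column sums of J vanish
  have hS0 : ∑ t, y t = 0 := by
    have hcol : ∀ j, ∑ t, centeringMatrix m t j = 0 := by
      intro j
      have hc : (m : ℝ) ≠ 0 := Nat.cast_ne_zero.mpr hm.ne'
      simp [centeringMatrix, Matrix.one_apply, Finset.sum_sub_distrib,
        Finset.sum_ite_eq, mul_inv_cancel₀ hc]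
    calc ∑ t, y t = ∑ t, ∑ j, centeringMatrix m t j * x j := rfl
      _ = ∑ j, (∑ t, centeringMatrix m t j) * x j := by
          rw [Finset.sum_comm]; simp_rw [Finset.sum_mul]
      _ = 0 := by simp [hcol]
  -- positivity of the Δbar form
  have hR : x ⬝ᵥ (doubleCenter Δbar *ᵥ x) = (∑ t, y t * a t) ^ 2 := by
    rw [dc_quad, ← hy]
    have hyy : y ⬝ᵥ (Δbar *ᵥ y) = -2 * (∑ t, y t * a t) ^ 2 := by
      calc y ⬝ᵥ (Δbar *ᵥ y) = ∑ t, ∑ u, y t * (Δbar t u * y u) := by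
            simp [dotProduct, Matrix.mulVec, Finset.mul_sum]
        _ = ∑ t, ∑ u, ((y t * a t ^ 2) * y u + y t * (y u * a u ^ 2)
              - 2 * ((y t * a t) * (y u * a u))) := by
            refine Finset.sum_congr rfl fun t _ => Finset.sum_congr rfl fun u _ => ?_
            rw [hΔbar, sq_abs]; ring
        _ = (∑ t, y t * a t ^ 2) * (∑ u, y u) + (∑ t, y t) * (∑ u, y u * a u ^ 2)
              - 2 * ((∑ t, y t * a t) * (∑ u, y u * a u)) := by
            rw [Finset.sum_mul_sum, Finset.sum_mul_sum, Finset.sum_mul_sum, Finset.mul_sum]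
            simp only [Finset.mul_sum]
            rw [← Finset.sum_add_distrib, ← Finset.sum_sub_distrib]
            refine Finset.sum_congr rfl fun t _ => ?_
            rw [← Finset.sum_add_distrib, ← Finset.sum_sub_distrib]
        _ = -2 * (∑ t, y t * a t) ^ 2 := by rw [hS0]; ring
    rw [hyy]; ring
  have hRnn : 0 ≤ x ⬝ᵥ (doubleCenter Δbar *ᵥ x) := hR ▸ sq_nonneg _
  rw [hP] at *
  constructor
  · have h1 : 0 ≤ 2 * β * (x ⬝ᵥ (doubleCenter Δhalf *ᵥ x) - μ₀ * (y ⬝ᵥ y)) :=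
      mul_nonneg (by linarith) (by linarith)
    nlinarith [h1, hRnn]
  · exact mul_nonneg (mul_nonneg hbeta (by linarith)) hPnn
end

section
/- Let n, m be positive integers, let r_1, ..., r_n be real labels taking exactly m distinct values a_1, ..., a_m, and let g : {1, ..., n} → {1, ..., m} be the map with r_i = a_{g(i)} for every i. Fix β ∈ ℝ, define Δ ∈ S^m by Δ_{tu} = (|a_t - a_u| + β)^2 for t ≠ u and Δ_{tt} = 0, and define D ∈ S^n by D_{ij} = (|r_i - r_j| + β)^2 if r_i ≠ r_j and D_{ij} = 0 otherwise. Suppose z_1, ..., z_m ∈ ℝ^{s} are points with ‖z_t - z_u‖^2 = Δ_{tu} for all t, u. Define ỹ_i := z_{g(i)} for i = 1, ..., n, let ȳ := (1/n) (ỹ_1 + ... + ỹ_n), and set y_i := ỹ_i - ȳ. Then y_1 + ... + y_n = 0 and ‖y_i - y_j‖^2 = D_{ij} for all i, j. -/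
open Matrix

theorem stmt10 (n m s : ℕ) (hn : 0 < n) (hm : 0 < m)
    (r : Fin n → ℝ) (a : Fin m → ℝ)
    (ha : Function.Injective a)
    (g : Fin n → Fin m)
    (hg : ∀ i, r i = a (g i))
    (hgsurj : Function.Surjective g)
    (β : ℝ)
    (Δ : Matrix (Fin m) (Fin m) ℝ)
    (hΔ : ∀ t u, Δ t u = if t = u then 0 else (|a t - a u| + β) ^ 2)
    (D : Matrix (Fin n) (Fin n) ℝ)
    (hD : ∀ i j, D i j = if r i = r j then 0 else (|r i - r j| + β) ^ 2)
    (z : Fin m → EuclideanSpace ℝ (Fin s))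
    (hz : ∀ t u, ‖z t - z u‖ ^ 2 = Δ t u)
    (ybar : EuclideanSpace ℝ (Fin s))
    (hybar : ybar = (n : ℝ)⁻¹ • ∑ i, z (g i))
    (y : Fin n → EuclideanSpace ℝ (Fin s))
    (hy : ∀ i, y i = z (g i) - ybar) :
    (∑ i, y i = 0) ∧ ∀ i j, ‖y i - y j‖ ^ 2 = D i j := by
  constructor
  · simp only [hy, Finset.sum_sub_distrib, Finset.sum_const, Finset.card_univ,
      Fintype.card_fin, hybar, sub_eq_zero]
    rw [← Nat.cast_smul_eq_nsmul ℝ, smul_smul, mul_inv_cancel₀ (by exact_mod_cast hn.ne'), one_smul]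
  · intro i j
    have : y i - y j = z (g i) - z (g j) := by rw [hy, hy]; abel
    rw [this, hz, hΔ, hD, hg i, hg j]
    by_cases h : g i = g j
    · simp [h]
    · rw [if_neg h, if_neg (fun he => h (ha he))]
end
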